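/- arXiv:0912.2899 — 3 statements merged into one kernel-verified Lean document; each statement's English description precedes it below -/
import Mathlib

section
/- Fix a positive integer n. For any nonnegative reals a_1, ..., a_n, sum_{s=0}^{⌊log₂ n⌋} 2^s · (sum_{l=1}^{n} a_l/(2^s + l - 1))² ≤ C · sum_{l=1}^{n} a_l², where C is an absolute constant independent of n and of the a_l. -/
open Finset


lemma sqrt2_pow (s : ℕ) : Real.sqrt ((2:ℝ)^s) = (Real.sqrt 2)^s := by
  have h : ((Real.sqrt 2)^s)^2 = (2:ℝ)^s := by
    rw [← pow_mul, mul_comm, pow_mul, Real.sq_sqrt (by norm_num : (0:ℝ) ≤ 2)]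
  rw [← h, Real.sqrt_sq (by positivity)]

lemma sum_inv_sqrt : ∀ m : ℕ, ∑ l ∈ Finset.Icc 1 m, 1 / Real.sqrt l ≤ 2 * Real.sqrt m := by
  intro m
  induction m with
  | zero => simp
  | succ m ih =>
    rw [Finset.sum_Icc_succ_top (by omega)]
    have h2 : (0:ℝ) < Real.sqrt ((m:ℝ)+1) := by positivity
    have hs1 : Real.sqrt ((m:ℝ)+1) ^ 2 = (m:ℝ)+1 := Real.sq_sqrt (by positivity)
    have hs0 : Real.sqrt (m:ℝ) ^ 2 = (m:ℝ) := Real.sq_sqrt (by positivity)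
    have h1 : Real.sqrt (m:ℝ) * Real.sqrt ((m:ℝ)+1) ≤ (m:ℝ) + 1/2 := by
      nlinarith [Real.sqrt_nonneg (m:ℝ), Real.sqrt_nonneg ((m:ℝ)+1),
        sq_nonneg (Real.sqrt (m:ℝ) - Real.sqrt ((m:ℝ)+1))]
    have key : 1 / Real.sqrt ((m:ℝ)+1) ≤ 2 * Real.sqrt ((m:ℝ)+1) - 2 * Real.sqrt (m:ℝ) := by
      rw [div_le_iff₀ h2]
      nlinarith
    push_cast
    linarith



lemma tail_step (M : ℕ) (hM : 1 ≤ M) :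
    1 / (((M:ℝ)+1) * Real.sqrt ((M:ℝ)+1)) ≤ 2 / Real.sqrt (M:ℝ) - 2 / Real.sqrt ((M:ℝ)+1) := by
  set u := Real.sqrt (M:ℝ) with hu0
  set v := Real.sqrt ((M:ℝ)+1) with hv0
  have hu : (0:ℝ) < u := Real.sqrt_pos.2 (by exact_mod_cast Nat.cast_pos.2 hM)
  have hv : (0:ℝ) < v := Real.sqrt_pos.2 (by positivity)
  have hu2 : u^2 = (M:ℝ) := Real.sq_sqrt (by positivity)
  have hv2 : v^2 = (M:ℝ)+1 := Real.sq_sqrt (by positivity)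
  have huv : u ≤ v := Real.sqrt_le_sqrt (by linarith)
  have hone : (v-u)*(v+u) = 1 := by nlinarith
  rw [div_sub_div _ _ hu.ne' hv.ne', div_le_div_iff₀ (by positivity) (by positivity)]
  have hMv : (M:ℝ)+1 = v^2 := hv2.symm
  rw [hMv]
  -- goal : 1 * (u*v) ≤ (2*v - 2*u) * (v^2*v)
  have key : u*v*(u+v) ≤ 2*(v*v*v) := by nlinarith [mul_nonneg (mul_nonneg hv.le hv.le) (sub_nonneg.2 huv), mul_nonneg (mul_nonneg hv.le (sub_nonneg.2 huv)) (add_pos hu hv).le]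
  have h3 : (2*v - 2*u) * (v^2*v) * (u+v) = 2*(v*v*v)*((v-u)*(v+u)) := by ring
  have h4 : (2*v - 2*u) * (v^2*v) * (u+v) = 2*(v*v*v) := by rw [h3, hone]; ring
  refine le_of_mul_le_mul_right ?_ (add_pos hu hv)
  have h5 : (2*v - u*2)*(v^2*v)*(u+v) = 2*(v*v*v)*((v-u)*(v+u)) := by ring
  rw [h5, hone]
  nlinarith [key]

lemma tail_sum (m : ℕ) (hm : 1 ≤ m) : ∀ M, ∑ l ∈ Finset.Ioc m M, 1 / ((l:ℝ) * Real.sqrt l) ≤ 2 / Real.sqrt m := by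
  have main : ∀ M, m ≤ M → ∑ l ∈ Finset.Ioc m M, 1 / ((l:ℝ) * Real.sqrt l) ≤ 2 / Real.sqrt m - 2 / Real.sqrt M := by
    intro M
    induction M with
    | zero => intro h; omega
    | succ M ih =>
      intro h
      rcases Nat.lt_or_ge m (M+1) with h' | h'
      · have hmM : m ≤ M := by omega
        rw [Finset.sum_Ioc_succ_top hmM]
        have hstep := tail_step M (by omega)
        have := ih hmM
        push_cast
        push_cast at this hstep
        linarith
      · have : m = M+1 := by omega
        subst this
        simp
  intro M
  rcases Nat.lt_or_ge M m with h | h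
  · rw [Finset.Ioc_eq_empty (by omega)]
    simp
    positivity
  · have := main M h
    have : (0:ℝ) ≤ 2 / Real.sqrt M := by positivity
    linarith [main M h]



lemma geom_up : ∀ k : ℕ, ∑ s ∈ Finset.range (k+1), (Real.sqrt 2)^s ≤ (2 + Real.sqrt 2) * (Real.sqrt 2)^k := by
  intro k
  have h2 : Real.sqrt 2 * Real.sqrt 2 = 2 := Real.mul_self_sqrt (by norm_num)
  induction k with
  | zero => simp; nlinarith [Real.sqrt_nonneg 2]
  | succ k ih =>
    rw [Finset.sum_range_succ, pow_succ]
    have hp : (0:ℝ) ≤ (Real.sqrt 2)^k := by positivity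
    nlinarith [ih]

lemma geom_down : ∀ N : ℕ, ∑ s ∈ Finset.range N, ((Real.sqrt 2)⁻¹)^s ≤ 2 + Real.sqrt 2 := by
  have h2 : Real.sqrt 2 * Real.sqrt 2 = 2 := Real.mul_self_sqrt (by norm_num)
  have hs2 : (1:ℝ) < Real.sqrt 2 := by nlinarith [Real.sqrt_nonneg 2]
  set r : ℝ := (Real.sqrt 2)⁻¹ with hr
  have hr0 : 0 < r := by positivity
  have hr1 : r < 1 := inv_lt_one_of_one_lt₀ hs2
  have hne : (1:ℝ) - r ≠ 0 := by intro h; nlinarith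
  have main : ∀ N, ∑ s ∈ Finset.range N, r^s ≤ (1 - r^N)/(1-r) := by
    intro N
    induction N with
    | zero => simp
    | succ N ih =>
      rw [Finset.sum_range_succ]
      have h3 : (1 - r^(N+1))/(1-r) = (1-r^N)/(1-r) + r^N := by
        field_simp
        ring
      linarith
  intro N
  calc ∑ s ∈ Finset.range N, r^s ≤ (1 - r^N)/(1-r) := main N
    _ ≤ 1/(1-r) := by
        apply div_le_div_of_nonneg_right ?_ (by linarith)
        linarith [pow_nonneg hr0.le N]
    _ = 2 + Real.sqrt 2 := by
        rw [hr]
        rw [div_eq_iff (by intro h; apply hne; rw [hr]; linarith)]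
        field_simp
        nlinarith


lemma lemA (n s : ℕ) :
    ∑ l ∈ Finset.Icc 1 n, 1 / (Real.sqrt l * ((2:ℝ)^s + l - 1)) ≤ 4 / (Real.sqrt 2)^s := by
  set m := 2^s with hm
  have hm1 : 1 ≤ m := Nat.one_le_two_pow
  have hcast : ((m:ℕ):ℝ) = (2:ℝ)^s := by rw [hm]; push_cast; ring
  have hsqm : Real.sqrt (m:ℝ) = (Real.sqrt 2)^s := by rw [hcast, sqrt2_pow]
  have h2spos : (0:ℝ) < (2:ℝ)^s := by positivity
  have hr2pos : (0:ℝ) < (Real.sqrt 2)^s := by positivity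
  have hsq : ((Real.sqrt 2)^s)^2 = (2:ℝ)^s := by
    rw [← pow_mul, mul_comm, pow_mul, Real.sq_sqrt (by norm_num : (0:ℝ) ≤ 2)]
  have hIoc : ∀ K : ℕ, Finset.Icc 1 K = Finset.Ioc 0 K := by
    intro K; ext x; simp [Finset.mem_Icc, Finset.mem_Ioc]; omega
  set M := max n m with hM
  have hterm : ∀ l : ℕ, l ∈ Finset.Icc 1 M → 0 ≤ 1 / (Real.sqrt l * ((2:ℝ)^s + l - 1)) := by
    intro l hl
    simp only [Finset.mem_Icc] at hl
    have : (1:ℝ) ≤ (l:ℝ) := by exact_mod_cast hl.1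
    have : (0:ℝ) < (2:ℝ)^s + l - 1 := by linarith
    positivity
  have step1 : ∑ l ∈ Finset.Icc 1 n, 1 / (Real.sqrt l * ((2:ℝ)^s + l - 1))
      ≤ ∑ l ∈ Finset.Icc 1 M, 1 / (Real.sqrt l * ((2:ℝ)^s + l - 1)) := by
    apply Finset.sum_le_sum_of_subset_of_nonneg
    · exact Finset.Icc_subset_Icc_right (le_max_left _ _)
    · intro l hl _; exact hterm l hl
  have hsplit : ∑ l ∈ Finset.Icc 1 M, 1 / (Real.sqrt l * ((2:ℝ)^s + l - 1))
      = (∑ l ∈ Finset.Ioc 0 m, 1 / (Real.sqrt l * ((2:ℝ)^s + l - 1)))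
        + ∑ l ∈ Finset.Ioc m M, 1 / (Real.sqrt l * ((2:ℝ)^s + l - 1)) := by
    rw [hIoc M, Finset.sum_Ioc_consecutive _ (Nat.zero_le m) (le_max_right n m)]
  have part1 : ∑ l ∈ Finset.Ioc 0 m, 1 / (Real.sqrt l * ((2:ℝ)^s + l - 1))
      ≤ 2 / (Real.sqrt 2)^s := by
    have hb : ∑ l ∈ Finset.Ioc 0 m, 1 / (Real.sqrt l * ((2:ℝ)^s + l - 1))
        ≤ ∑ l ∈ Finset.Ioc 0 m, (1 / Real.sqrt l) * (1 / (2:ℝ)^s) := by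
      apply Finset.sum_le_sum
      intro l hl
      simp only [Finset.mem_Ioc] at hl
      have hl1 : (1:ℝ) ≤ (l:ℝ) := by exact_mod_cast hl.1
      have hsl : (0:ℝ) < Real.sqrt l := Real.sqrt_pos.2 (by linarith)
      rw [div_mul_div_comm, one_mul]
      apply one_div_le_one_div_of_le (by positivity)
      have : (2:ℝ)^s ≤ (2:ℝ)^s + l - 1 := by linarith
      nlinarith
    rw [← Finset.sum_mul] at hb
    have := sum_inv_sqrt m
    rw [hIoc m] at this
    calc ∑ l ∈ Finset.Ioc 0 m, 1 / (Real.sqrt l * ((2:ℝ)^s + l - 1))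
        ≤ (∑ l ∈ Finset.Ioc 0 m, 1 / Real.sqrt l) * (1 / (2:ℝ)^s) := hb
      _ ≤ (2 * Real.sqrt m) * (1 / (2:ℝ)^s) := by
          apply mul_le_mul_of_nonneg_right this (by positivity)
      _ = 2 / (Real.sqrt 2)^s := by
          rw [hsqm, ← hsq]
          field_simp
  have part2 : ∑ l ∈ Finset.Ioc m M, 1 / (Real.sqrt l * ((2:ℝ)^s + l - 1))
      ≤ 2 / (Real.sqrt 2)^s := by
    have hb : ∑ l ∈ Finset.Ioc m M, 1 / (Real.sqrt l * ((2:ℝ)^s + l - 1))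
        ≤ ∑ l ∈ Finset.Ioc m M, 1 / ((l:ℝ) * Real.sqrt l) := by
      apply Finset.sum_le_sum
      intro l hl
      simp only [Finset.mem_Ioc] at hl
      have hl1 : (1:ℝ) ≤ (l:ℝ) := by exact_mod_cast Nat.one_le_iff_ne_zero.2 (by omega)
      have hsl : (0:ℝ) < Real.sqrt l := Real.sqrt_pos.2 (by linarith)
      apply one_div_le_one_div_of_le (by positivity)
      have h2s1 : (1:ℝ) ≤ (2:ℝ)^s := one_le_pow₀ (by norm_num)
      have : (l:ℝ) ≤ (2:ℝ)^s + l - 1 := by linarith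
      nlinarith
    calc ∑ l ∈ Finset.Ioc m M, 1 / (Real.sqrt l * ((2:ℝ)^s + l - 1))
        ≤ ∑ l ∈ Finset.Ioc m M, 1 / ((l:ℝ) * Real.sqrt l) := hb
      _ ≤ 2 / Real.sqrt m := tail_sum m hm1 M
      _ = 2 / (Real.sqrt 2)^s := by rw [hsqm]
  calc ∑ l ∈ Finset.Icc 1 n, 1 / (Real.sqrt l * ((2:ℝ)^s + l - 1))
      ≤ _ := step1
    _ = _ := hsplit
    _ ≤ 2 / (Real.sqrt 2)^s + 2 / (Real.sqrt 2)^s := add_le_add part1 part2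
    _ = 4 / (Real.sqrt 2)^s := by ring


lemma sqrt2_pow' (s : ℕ) : Real.sqrt ((2:ℝ)^s) = (Real.sqrt 2)^s := by
  have h : ((Real.sqrt 2)^s)^2 = (2:ℝ)^s := by
    rw [← pow_mul, mul_comm, pow_mul, Real.sq_sqrt (by norm_num : (0:ℝ) ≤ 2)]
  rw [← h, Real.sqrt_sq (by positivity)]

lemma lemB (l T : ℕ) (hl : 1 ≤ l) :
    ∑ s ∈ Finset.range T, (Real.sqrt 2)^s / ((2:ℝ)^s + l - 1) ≤ 7 / Real.sqrt l := by
  set k := Nat.log 2 l with hk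
  have hk1 : 2^k ≤ l := Nat.pow_log_le_self 2 (by omega)
  have hk2 : l < 2^(k+1) := Nat.lt_pow_succ_log_self (by norm_num) l
  have hl1 : (1:ℝ) ≤ (l:ℝ) := by exact_mod_cast hl
  have hsl : (0:ℝ) < Real.sqrt l := Real.sqrt_pos.2 (by linarith)
  have hsqrt2 : Real.sqrt 2 ≤ 1.5 := by
    nlinarith [Real.sq_sqrt (show (0:ℝ) ≤ 2 by norm_num), Real.sqrt_nonneg 2]
  have hs2nn : (0:ℝ) ≤ Real.sqrt 2 := Real.sqrt_nonneg 2
  have hD : ∀ s : ℕ, (0:ℝ) < (2:ℝ)^s + l - 1 := by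
    intro s
    have : (1:ℝ) ≤ (2:ℝ)^s := one_le_pow₀ (by norm_num)
    linarith
  set M := max T (k+1) with hM
  have step1 : ∑ s ∈ Finset.range T, (Real.sqrt 2)^s / ((2:ℝ)^s + l - 1)
      ≤ ∑ s ∈ Finset.range M, (Real.sqrt 2)^s / ((2:ℝ)^s + l - 1) := by
    apply Finset.sum_le_sum_of_subset_of_nonneg
    · exact Finset.range_subset_range.2 (le_max_left _ _)
    · intro s _ _; have := hD s; positivity
  have hsplit : ∑ s ∈ Finset.range M, (Real.sqrt 2)^s / ((2:ℝ)^s + l - 1)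
      = (∑ s ∈ Finset.range (k+1), (Real.sqrt 2)^s / ((2:ℝ)^s + l - 1))
        + ∑ s ∈ Finset.Ico (k+1) M, (Real.sqrt 2)^s / ((2:ℝ)^s + l - 1) := by
    rw [Finset.sum_range_add_sum_Ico _ (le_max_right T (k+1))]
  have part1 : ∑ s ∈ Finset.range (k+1), (Real.sqrt 2)^s / ((2:ℝ)^s + l - 1)
      ≤ (2 + Real.sqrt 2) / Real.sqrt l := by
    have hb : ∑ s ∈ Finset.range (k+1), (Real.sqrt 2)^s / ((2:ℝ)^s + l - 1)
        ≤ ∑ s ∈ Finset.range (k+1), (Real.sqrt 2)^s / (l:ℝ) := by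
      apply Finset.sum_le_sum
      intro s _
      apply div_le_div_of_nonneg_left ?_ (by linarith) ?_ |>.trans_eq rfl
      · positivity
      · have : (1:ℝ) ≤ (2:ℝ)^s := one_le_pow₀ (by norm_num)
        linarith
    rw [← Finset.sum_div] at hb
    have hgk : (Real.sqrt 2)^k ≤ Real.sqrt l := by
      rw [← sqrt2_pow']
      apply Real.sqrt_le_sqrt
      exact_mod_cast hk1
    calc ∑ s ∈ Finset.range (k+1), (Real.sqrt 2)^s / ((2:ℝ)^s + l - 1)
        ≤ (∑ s ∈ Finset.range (k+1), (Real.sqrt 2)^s) / (l:ℝ) := hb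
      _ ≤ ((2 + Real.sqrt 2) * (Real.sqrt 2)^k) / (l:ℝ) := by
          apply div_le_div_of_nonneg_right (geom_up k) (by linarith)
      _ ≤ ((2 + Real.sqrt 2) * Real.sqrt l) / (l:ℝ) := by
          apply div_le_div_of_nonneg_right ?_ (by linarith)
          apply mul_le_mul_of_nonneg_left hgk (by linarith)
      _ = (2 + Real.sqrt 2) / Real.sqrt l := by
          rw [eq_div_iff hsl.ne']
          have : Real.sqrt l * Real.sqrt l = (l:ℝ) := Real.mul_self_sqrt (by linarith)
          field_simp
          nlinarith
  have part2 : ∑ s ∈ Finset.Ico (k+1) M, (Real.sqrt 2)^s / ((2:ℝ)^s + l - 1)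
      ≤ (2 + Real.sqrt 2) / Real.sqrt l := by
    have hr : ∀ s : ℕ, (Real.sqrt 2)^s / (2:ℝ)^s = ((Real.sqrt 2)⁻¹)^s := by
      intro s
      have hne : (Real.sqrt 2)^s ≠ 0 := by positivity
      have h : (2:ℝ)^s = (Real.sqrt 2)^s * (Real.sqrt 2)^s := by
        rw [← mul_pow, Real.mul_self_sqrt (by norm_num : (0:ℝ) ≤ 2)]
      rw [inv_pow, h, div_mul_eq_div_div, div_self hne, one_div]
    have hb : ∑ s ∈ Finset.Ico (k+1) M, (Real.sqrt 2)^s / ((2:ℝ)^s + l - 1)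
        ≤ ∑ s ∈ Finset.Ico (k+1) M, ((Real.sqrt 2)⁻¹)^s := by
      apply Finset.sum_le_sum
      intro s _
      rw [← hr s]
      apply div_le_div_of_nonneg_left ?_ (by positivity) ?_
      · positivity
      · linarith
    have heq : ∑ s ∈ Finset.Ico (k+1) M, ((Real.sqrt 2)⁻¹)^s
        = ((Real.sqrt 2)⁻¹)^(k+1) * ∑ i ∈ Finset.range (M - (k+1)), ((Real.sqrt 2)⁻¹)^i := by
      rw [Finset.sum_Ico_eq_sum_range, Finset.mul_sum]
      apply Finset.sum_congr rfl
      intro i _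
      rw [← pow_add]
    have hrk : ((Real.sqrt 2)⁻¹)^(k+1) ≤ 1 / Real.sqrt l := by
      rw [inv_pow, ← sqrt2_pow']
      rw [one_div, inv_le_inv₀ (by positivity) hsl]
      apply Real.sqrt_le_sqrt
      exact_mod_cast Nat.le_of_lt_succ (Nat.lt_succ_of_lt hk2)
    have hrknn : (0:ℝ) ≤ ((Real.sqrt 2)⁻¹)^(k+1) := by positivity
    calc ∑ s ∈ Finset.Ico (k+1) M, (Real.sqrt 2)^s / ((2:ℝ)^s + l - 1)
        ≤ ((Real.sqrt 2)⁻¹)^(k+1) * ∑ i ∈ Finset.range (M - (k+1)), ((Real.sqrt 2)⁻¹)^i := by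
          rw [← heq]; exact hb
      _ ≤ ((Real.sqrt 2)⁻¹)^(k+1) * (2 + Real.sqrt 2) := by
          apply mul_le_mul_of_nonneg_left (geom_down _) hrknn
      _ ≤ (1 / Real.sqrt l) * (2 + Real.sqrt 2) := by
          apply mul_le_mul_of_nonneg_right hrk (by linarith)
      _ = (2 + Real.sqrt 2) / Real.sqrt l := by ring
  calc ∑ s ∈ Finset.range T, (Real.sqrt 2)^s / ((2:ℝ)^s + l - 1)
      ≤ _ := step1
    _ = _ := hsplit
    _ ≤ (2 + Real.sqrt 2) / Real.sqrt l + (2 + Real.sqrt 2) / Real.sqrt l := add_le_add part1 part2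
    _ ≤ 7 / Real.sqrt l := by
        rw [← add_div, div_le_div_iff₀ hsl hsl]
        nlinarith


theorem stmt_6 :
    ∃ C > (0:ℝ), ∀ n : ℕ, 1 ≤ n → ∀ a : ℕ → ℝ, (∀ l, 0 ≤ a l) →
      ∑ s ∈ Finset.range (Nat.log 2 n + 1),
          (2:ℝ) ^ s * (∑ l ∈ Finset.Icc 1 n, a l / ((2:ℝ) ^ s + l - 1)) ^ 2
        ≤ C * ∑ l ∈ Finset.Icc 1 n, a l ^ 2 := by
  refine ⟨28, by norm_num, ?_⟩
  intro n hn a ha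
  set T := Nat.log 2 n + 1 with hT
  have hDpos : ∀ (s l : ℕ), 1 ≤ l → (0:ℝ) < (2:ℝ)^s + l - 1 := by
    intro s l hl
    have h1 : (1:ℝ) ≤ (l:ℝ) := by exact_mod_cast hl
    have h2 : (1:ℝ) ≤ (2:ℝ)^s := one_le_pow₀ (by norm_num)
    linarith
  have cs : ∀ s : ℕ, (2:ℝ)^s * (∑ l ∈ Finset.Icc 1 n, a l / ((2:ℝ)^s + l - 1))^2
      ≤ 4 * (Real.sqrt 2)^s * ∑ l ∈ Finset.Icc 1 n, Real.sqrt l * (a l)^2 / ((2:ℝ)^s + l - 1) := by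
    intro s
    have hsq : ((Real.sqrt 2)^s)^2 = (2:ℝ)^s := by
      rw [← pow_mul, mul_comm, pow_mul, Real.sq_sqrt (by norm_num : (0:ℝ) ≤ 2)]
    have hr2pos : (0:ℝ) < (Real.sqrt 2)^s := by positivity
    set f : ℕ → ℝ := fun l => Real.sqrt (1 / (Real.sqrt l * ((2:ℝ)^s + l - 1))) with hf
    set g : ℕ → ℝ := fun l => Real.sqrt (Real.sqrt l / ((2:ℝ)^s + l - 1)) * a l with hg
    have hfg : ∀ l ∈ Finset.Icc 1 n, a l / ((2:ℝ)^s + l - 1) = f l * g l := by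
      intro l hl
      simp only [Finset.mem_Icc] at hl
      have hd : (0:ℝ) < (2:ℝ)^s + l - 1 := hDpos s l hl.1
      have hu : (0:ℝ) < Real.sqrt l := Real.sqrt_pos.2 (by exact_mod_cast Nat.cast_pos.2 hl.1)
      have hmul : (1 / (Real.sqrt l * ((2:ℝ)^s + l - 1))) * (Real.sqrt l / ((2:ℝ)^s + l - 1))
          = (1 / ((2:ℝ)^s + l - 1))^2 := by
        field_simp
      rw [hf, hg]
      simp only
      rw [← mul_assoc, ← Real.sqrt_mul (by positivity), hmul,
        Real.sqrt_sq (by positivity)]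
      ring
    have hf2 : ∀ l ∈ Finset.Icc 1 n, f l ^ 2 = 1 / (Real.sqrt l * ((2:ℝ)^s + l - 1)) := by
      intro l hl
      simp only [Finset.mem_Icc] at hl
      have hd : (0:ℝ) < (2:ℝ)^s + l - 1 := hDpos s l hl.1
      exact Real.sq_sqrt (by positivity)
    have hg2 : ∀ l ∈ Finset.Icc 1 n, g l ^ 2 = Real.sqrt l * (a l)^2 / ((2:ℝ)^s + l - 1) := by
      intro l hl
      simp only [Finset.mem_Icc] at hl
      have hd : (0:ℝ) < (2:ℝ)^s + l - 1 := hDpos s l hl.1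
      rw [hg]
      simp only
      rw [mul_pow, Real.sq_sqrt (by positivity)]
      ring
    have hcs : (∑ l ∈ Finset.Icc 1 n, a l / ((2:ℝ)^s + l - 1))^2
        ≤ (∑ l ∈ Finset.Icc 1 n, 1 / (Real.sqrt l * ((2:ℝ)^s + l - 1)))
          * ∑ l ∈ Finset.Icc 1 n, Real.sqrt l * (a l)^2 / ((2:ℝ)^s + l - 1) := by
      rw [Finset.sum_congr rfl hfg, ← Finset.sum_congr rfl hf2, ← Finset.sum_congr rfl hg2]
      exact Finset.sum_mul_sq_le_sq_mul_sq _ f g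
    have hBnn : (0:ℝ) ≤ ∑ l ∈ Finset.Icc 1 n, Real.sqrt l * (a l)^2 / ((2:ℝ)^s + l - 1) := by
      apply Finset.sum_nonneg
      intro l hl
      simp only [Finset.mem_Icc] at hl
      have hd : (0:ℝ) < (2:ℝ)^s + l - 1 := hDpos s l hl.1
      positivity
    have h2 : (2:ℝ)^s * (∑ l ∈ Finset.Icc 1 n, a l / ((2:ℝ)^s + l - 1))^2
        ≤ (2:ℝ)^s * ((4 / (Real.sqrt 2)^s)
          * ∑ l ∈ Finset.Icc 1 n, Real.sqrt l * (a l)^2 / ((2:ℝ)^s + l - 1)) := by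
      apply mul_le_mul_of_nonneg_left ?_ (by positivity)
      exact hcs.trans (mul_le_mul_of_nonneg_right (lemA n s) hBnn)
    have hpow : (2:ℝ)^s * (4 / (Real.sqrt 2)^s) = 4 * (Real.sqrt 2)^s := by
      rw [← hsq]; field_simp
    calc (2:ℝ)^s * (∑ l ∈ Finset.Icc 1 n, a l / ((2:ℝ)^s + l - 1))^2
        ≤ _ := h2
      _ = 4 * (Real.sqrt 2)^s * ∑ l ∈ Finset.Icc 1 n, Real.sqrt l * (a l)^2 / ((2:ℝ)^s + l - 1) := by
          rw [← mul_assoc, hpow]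
  calc ∑ s ∈ Finset.range T, (2:ℝ)^s * (∑ l ∈ Finset.Icc 1 n, a l / ((2:ℝ)^s + l - 1))^2
      ≤ ∑ s ∈ Finset.range T,
          4 * (Real.sqrt 2)^s * ∑ l ∈ Finset.Icc 1 n, Real.sqrt l * (a l)^2 / ((2:ℝ)^s + l - 1) :=
        Finset.sum_le_sum fun s _ => cs s
    _ = ∑ l ∈ Finset.Icc 1 n, (4 * (Real.sqrt l * (a l)^2))
          * ∑ s ∈ Finset.range T, (Real.sqrt 2)^s / ((2:ℝ)^s + l - 1) := by
        simp_rw [Finset.mul_sum]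
        rw [Finset.sum_comm]
        refine Finset.sum_congr rfl fun l _ => Finset.sum_congr rfl fun s _ => by ring
    _ ≤ ∑ l ∈ Finset.Icc 1 n, (4 * (Real.sqrt l * (a l)^2)) * (7 / Real.sqrt l) := by
        apply Finset.sum_le_sum
        intro l hl
        simp only [Finset.mem_Icc] at hl
        apply mul_le_mul_of_nonneg_left (lemB l T hl.1) (by positivity)
    _ = ∑ l ∈ Finset.Icc 1 n, 28 * (a l)^2 := by
        refine Finset.sum_congr rfl fun l hl => ?_
        simp only [Finset.mem_Icc] at hl
        have hu : (0:ℝ) < Real.sqrt l := Real.sqrt_pos.2 (by exact_mod_cast Nat.cast_pos.2 hl.1)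
        field_simp
        ring
    _ = 28 * ∑ l ∈ Finset.Icc 1 n, a l ^ 2 := by rw [← Finset.mul_sum]
end

section
/- Let (a_m) be a sequence in ℓ²_v (i.e., sum |a_m|² v_m < ∞), where (v_m) are positive with partial sums V_n = sum_{m<n} v_m, and let (τ_n) be nonnegative numbers satisfying sup_n V_n · sum_{m ≥ n} τ_m² ≤ A < ∞. Then sum_{n=1}^{∞} τ_n² (sum_{m=1}^{n-1} |a_m| v_m)² ≤ C·A · sum_{m} |a_m|² v_m for an absolute constant C. -/
open Finset Real

section HardyAux

variable (v V τ : ℕ → ℝ) (a : ℕ → ℂ) (A : ℝ)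
  (hv : ∀ m, 0 < v m)
  (hV : ∀ n, V n = ∑ m ∈ Finset.Icc 1 (n-1), v m)
  (hτ : ∀ n, 0 ≤ τ n)
  (hsum : ∀ n, Summable (fun m : ℕ => if n ≤ m then τ m ^ 2 else 0))
  (hA : ∀ n, V n * (∑' m : ℕ, if n ≤ m then τ m ^ 2 else 0) ≤ A)

include hV in
lemma hardy_Vsucc (m : ℕ) (hm : 1 ≤ m) : V (m+1) = V m + v m := by
  obtain ⟨k, rfl⟩ : ∃ k, m = k + 1 := ⟨m - 1, by omega⟩
  rw [hV, hV]
  simp only [Nat.add_sub_cancel]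
  exact Finset.sum_Icc_succ_top (by omega) v

include hv hV in
lemma hardy_Vmono : Monotone V := by
  intro m n hmn
  rw [hV, hV]
  apply Finset.sum_le_sum_of_subset_of_nonneg
  · exact Finset.Icc_subset_Icc le_rfl (by omega)
  · exact fun i _ _ => (hv i).le

include hv hV in
lemma hardy_Vnonneg (n : ℕ) : 0 ≤ V n := by
  rw [hV]; exact Finset.sum_nonneg fun i _ => (hv i).le

include hv hV in
lemma hardy_Vpos (n : ℕ) (hn : 2 ≤ n) : 0 < V n := by
  have h2 : V 2 = v 1 := by rw [hV]; simp
  have := hardy_Vmono v V hv hV hn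
  have := hv 1
  linarith

include hv hV in
lemma hardy_tele1 (n : ℕ) :
    ∑ m ∈ Finset.Icc 1 (n-1), v m / Real.sqrt (V (m+1)) ≤ 2 * Real.sqrt (V n) := by
  induction n with
  | zero => simp [Real.sqrt_nonneg]
  | succ n ih =>
    rcases Nat.eq_zero_or_pos n with rfl | hn
    · simp [Real.sqrt_nonneg]
    · have hn1 : n - 1 + 1 = n := by omega
      rw [Nat.add_sub_cancel, ← hn1, Finset.sum_Icc_succ_top (by omega), hn1]
      have hVs : V (n+1) = V n + v n := hardy_Vsucc v V hV n hn
      set x := Real.sqrt (V n) with hx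
      set y := Real.sqrt (V (n+1)) with hy
      have hxy : x ≤ y := Real.sqrt_le_sqrt (by linarith [hv n])
      have hx0 : 0 ≤ x := Real.sqrt_nonneg _
      have hy0 : 0 < y := Real.sqrt_pos.mpr (hardy_Vpos v V hv hV (n+1) (by omega))
      have hx2 : x^2 = V n := Real.sq_sqrt (hardy_Vnonneg v V hv hV n)
      have hy2 : y^2 = V (n+1) := Real.sq_sqrt (hardy_Vnonneg v V hv hV (n+1))
      have hstep : v n / y ≤ 2 * (y - x) := by
        rw [div_le_iff₀ hy0]
        nlinarith
      calc ∑ m ∈ Finset.Icc 1 (n-1), v m / Real.sqrt (V (m+1)) + v n / y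
          ≤ 2 * x + v n / y := by linarith [ih]
        _ ≤ 2 * y := by linarith

include hv hV in
lemma hardy_sqrt_decomp (m : ℕ) : ∀ n, m + 1 ≤ n →
    Real.sqrt (V n) = Real.sqrt (V (m+1))
      + ∑ k ∈ Finset.Icc (m+2) n, (Real.sqrt (V k) - Real.sqrt (V (k-1))) := by
  intro n hn
  induction n with
  | zero => omega
  | succ n ih =>
    rcases Nat.lt_or_ge n (m+1) with h | h
    · have : m + 1 = n + 1 := by omega
      rw [← this]
      rw [show Finset.Icc (m+2) (m+1) = ∅ from Finset.Icc_eq_empty (by omega)]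
      simp
    · rw [Finset.sum_Icc_succ_top (by omega)]
      have := ih h
      simp only [Nat.add_sub_cancel]
      linarith

lemma hardy_tele2 (m : ℕ) : ∀ N,
    ∑ k ∈ Finset.Icc (m+2) N, (1 / Real.sqrt (V (k-1)) - 1 / Real.sqrt (V k))
      ≤ 1 / Real.sqrt (V (m+1)) := by
  intro N
  have key : ∀ N, m + 1 ≤ N →
      ∑ k ∈ Finset.Icc (m+2) N, (1 / Real.sqrt (V (k-1)) - 1 / Real.sqrt (V k))
        = 1 / Real.sqrt (V (m+1)) - 1 / Real.sqrt (V N) := by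
    intro N hN
    induction N with
    | zero => omega
    | succ N ih =>
      rcases Nat.lt_or_ge N (m+1) with h | h
      · have : m + 1 = N + 1 := by omega
        rw [← this, show Finset.Icc (m+2) (m+1) = ∅ from Finset.Icc_eq_empty (by omega)]
        simp
      · rw [Finset.sum_Icc_succ_top (by omega), ih h]
        simp
  rcases Nat.lt_or_ge N (m+1) with h | h
  · rw [show Finset.Icc (m+2) N = ∅ from Finset.Icc_eq_empty (by omega)]
    simp only [Finset.sum_empty]
    positivity
  · rw [key N h]
    have : 0 ≤ 1 / Real.sqrt (V N) := by positivity
    linarith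

include hτ hsum in
lemma hardy_partial_le_T (k N : ℕ) :
    ∑ n ∈ Finset.Icc k N, τ n ^ 2 ≤ ∑' j : ℕ, if k ≤ j then τ j ^2 else 0 := by
  have : ∑ n ∈ Finset.Icc k N, τ n ^ 2
      = ∑ n ∈ Finset.Icc k N, (if k ≤ n then τ n ^2 else 0) := by
    apply Finset.sum_congr rfl
    intro n hn
    rw [if_pos (Finset.mem_Icc.mp hn).1]
  rw [this]
  exact Summable.sum_le_tsum _ (fun i _ => by positivity) (hsum k)

include hv hV hA in
lemma hardy_T_le (k : ℕ) (hk : 2 ≤ k) :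
    (∑' j : ℕ, if k ≤ j then τ j ^2 else 0) ≤ A / V k := by
  rw [le_div_iff₀ (hardy_Vpos v V hv hV k hk)]
  linarith [hA k]

include hv hV hτ hsum hA in
lemma hardy_tail (hA0 : 0 ≤ A) (m N : ℕ) (hm : 1 ≤ m) :
    ∑ n ∈ Finset.Icc (m+1) N, τ n ^ 2 * Real.sqrt (V n) ≤ 2 * A / Real.sqrt (V (m+1)) := by
  have Vmono := hardy_Vmono v V hv hV
  have Vpos := hardy_Vpos v V hv hV
  have hVm1 : 0 < V (m+1) := Vpos (m+1) (by omega)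
  have hsVm1 : 0 < Real.sqrt (V (m+1)) := Real.sqrt_pos.mpr hVm1
  have step1 : ∑ n ∈ Finset.Icc (m+1) N, τ n ^ 2 * Real.sqrt (V n)
      = Real.sqrt (V (m+1)) * (∑ n ∈ Finset.Icc (m+1) N, τ n ^ 2)
        + ∑ n ∈ Finset.Icc (m+1) N, ∑ k ∈ Finset.Icc (m+2) n,
            τ n ^2 * (Real.sqrt (V k) - Real.sqrt (V (k-1))) := by
    rw [Finset.mul_sum, ← Finset.sum_add_distrib]
    apply Finset.sum_congr rfl
    intro n hn
    rw [hardy_sqrt_decomp v V hv hV m n (Finset.mem_Icc.mp hn).1, ← Finset.mul_sum]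
    ring
  rw [step1]
  have step2 : ∑ n ∈ Finset.Icc (m+1) N, ∑ k ∈ Finset.Icc (m+2) n,
        τ n ^2 * (Real.sqrt (V k) - Real.sqrt (V (k-1)))
      = ∑ k ∈ Finset.Icc (m+2) N,
          (Real.sqrt (V k) - Real.sqrt (V (k-1))) * ∑ n ∈ Finset.Icc k N, τ n ^2 := by
    rw [Finset.sum_comm' (t' := Finset.Icc (m+2) N) (s' := fun k => Finset.Icc k N)]
    · apply Finset.sum_congr rfl
      intro k _
      rw [Finset.mul_sum]
      apply Finset.sum_congr rfl
      intro n _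
      ring
    · intro n k
      simp only [Finset.mem_Icc]
      omega
  rw [step2]
  have bound2 : ∑ k ∈ Finset.Icc (m+2) N,
        (Real.sqrt (V k) - Real.sqrt (V (k-1))) * ∑ n ∈ Finset.Icc k N, τ n ^2
      ≤ A / Real.sqrt (V (m+1)) := by
    calc ∑ k ∈ Finset.Icc (m+2) N,
          (Real.sqrt (V k) - Real.sqrt (V (k-1))) * ∑ n ∈ Finset.Icc k N, τ n ^2
        ≤ ∑ k ∈ Finset.Icc (m+2) N, A * (1 / Real.sqrt (V (k-1)) - 1 / Real.sqrt (V k)) := by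
          apply Finset.sum_le_sum
          intro k hk
          have hk2 : m + 2 ≤ k := (Finset.mem_Icc.mp hk).1
          have hVk : 0 < V k := Vpos k (by omega)
          have hVk1 : 0 < V (k-1) := Vpos (k-1) (by omega)
          set x := Real.sqrt (V (k-1)) with hxd
          set y := Real.sqrt (V k) with hyd
          have hx : 0 < x := Real.sqrt_pos.mpr hVk1
          have hy : 0 < y := Real.sqrt_pos.mpr hVk
          have hxy : x ≤ y := Real.sqrt_le_sqrt (Vmono (Nat.sub_le k 1))
          have hy2 : y^2 = V k := Real.sq_sqrt hVk.le
          have h1 : (y - x) * (∑ n ∈ Finset.Icc k N, τ n ^2) ≤ (y - x) * (A / V k) := by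
            apply mul_le_mul_of_nonneg_left _ (by linarith)
            calc ∑ n ∈ Finset.Icc k N, τ n ^2 ≤ _ := hardy_partial_le_T τ hτ hsum k N
              _ ≤ A / V k := hardy_T_le v V τ A hv hV hA k (by omega)
          refine h1.trans ?_
          rw [← hy2]
          have expand : A * (1/x - 1/y) - (y - x) * (A / y^2) = A * ((y-x)^2 / (x * y^2)) := by
            field_simp
          have hnn : 0 ≤ A * ((y-x)^2 / (x * y^2)) := by positivity
          linarith
      _ = A * ∑ k ∈ Finset.Icc (m+2) N, (1 / Real.sqrt (V (k-1)) - 1 / Real.sqrt (V k)) := by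
          rw [Finset.mul_sum]
      _ ≤ A * (1 / Real.sqrt (V (m+1))) :=
          mul_le_mul_of_nonneg_left (hardy_tele2 V m N) hA0
      _ = A / Real.sqrt (V (m+1)) := by ring
  have bound1 : Real.sqrt (V (m+1)) * (∑ n ∈ Finset.Icc (m+1) N, τ n ^ 2)
      ≤ A / Real.sqrt (V (m+1)) := by
    have h1 : ∑ n ∈ Finset.Icc (m+1) N, τ n ^ 2 ≤ A / V (m+1) := by
      calc ∑ n ∈ Finset.Icc (m+1) N, τ n ^2 ≤ _ := hardy_partial_le_T τ hτ hsum (m+1) N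
        _ ≤ A / V (m+1) := hardy_T_le v V τ A hv hV hA (m+1) (by omega)
    have h2 : Real.sqrt (V (m+1)) * (A / V (m+1)) = A / Real.sqrt (V (m+1)) := by
      rw [eq_div_iff hsVm1.ne']
      calc Real.sqrt (V (m+1)) * (A / V (m+1)) * Real.sqrt (V (m+1))
          = (Real.sqrt (V (m+1)) * Real.sqrt (V (m+1))) * (A / V (m+1)) := by ring
        _ = V (m+1) * (A / V (m+1)) := by rw [Real.mul_self_sqrt hVm1.le]
        _ = A := by field_simp
    calc Real.sqrt (V (m+1)) * (∑ n ∈ Finset.Icc (m+1) N, τ n ^ 2)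
        ≤ Real.sqrt (V (m+1)) * (A / V (m+1)) := mul_le_mul_of_nonneg_left h1 hsVm1.le
      _ = A / Real.sqrt (V (m+1)) := h2
  rw [show (2:ℝ) * A / Real.sqrt (V (m+1))
      = A / Real.sqrt (V (m+1)) + A / Real.sqrt (V (m+1)) by ring]
  linarith

include hv hV in
lemma hardy_cs_step (n : ℕ) :
    (∑ m ∈ Finset.Icc 1 (n-1), ‖a m‖ * v m) ^ 2
      ≤ (∑ m ∈ Finset.Icc 1 (n-1), ‖a m‖ ^2 * v m * Real.sqrt (V (m+1)))
          * (2 * Real.sqrt (V n)) := by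
  have Vpos := hardy_Vpos v V hv hV
  set f : ℕ → ℝ := fun m => ‖a m‖ * Real.sqrt (v m * Real.sqrt (V (m+1))) with hf
  set g : ℕ → ℝ := fun m => Real.sqrt (v m / Real.sqrt (V (m+1))) with hg
  have h1 : ∑ m ∈ Finset.Icc 1 (n-1), ‖a m‖ * v m
      = ∑ m ∈ Finset.Icc 1 (n-1), f m * g m := by
    apply Finset.sum_congr rfl
    intro m hm
    have hm1 : 1 ≤ m := (Finset.mem_Icc.mp hm).1
    have hVp : 0 < Real.sqrt (V (m+1)) := Real.sqrt_pos.mpr (Vpos (m+1) (by omega))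
    have hvm := hv m
    simp only [hf, hg]
    rw [mul_assoc, ← Real.sqrt_mul (by positivity)]
    congr 1
    rw [show v m * Real.sqrt (V (m+1)) * (v m / Real.sqrt (V (m+1))) = v m ^2 by field_simp]
    exact (Real.sqrt_sq hvm.le).symm
  have h2 := Finset.sum_mul_sq_le_sq_mul_sq (Finset.Icc 1 (n-1)) f g
  have h3 : ∑ m ∈ Finset.Icc 1 (n-1), f m ^2
      = ∑ m ∈ Finset.Icc 1 (n-1), ‖a m‖ ^2 * v m * Real.sqrt (V (m+1)) := by
    apply Finset.sum_congr rfl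
    intro m hm
    simp only [hf]
    rw [mul_pow, Real.sq_sqrt (mul_nonneg (hv m).le (Real.sqrt_nonneg _))]
    ring
  have h4 : ∑ m ∈ Finset.Icc 1 (n-1), g m ^2
      = ∑ m ∈ Finset.Icc 1 (n-1), v m / Real.sqrt (V (m+1)) := by
    apply Finset.sum_congr rfl
    intro m hm
    simp only [hg]
    exact Real.sq_sqrt (div_nonneg (hv m).le (Real.sqrt_nonneg _))
  rw [h1]
  refine h2.trans ?_
  rw [h3, h4]
  apply mul_le_mul_of_nonneg_left (hardy_tele1 v V hv hV n)
  apply Finset.sum_nonneg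
  intro m hm
  exact mul_nonneg (mul_nonneg (sq_nonneg _) (hv m).le) (Real.sqrt_nonneg _)

end HardyAux

theorem stmt_13 :
    ∃ C > (0:ℝ), ∀ (v : ℕ → ℝ) (a : ℕ → ℂ) (τ : ℕ → ℝ) (V : ℕ → ℝ) (A : ℝ),
      (∀ m, 0 < v m) →
      (∀ n, V n = ∑ m ∈ Finset.Icc 1 (n - 1), v m) →
      Summable (fun m : ℕ => ‖a m‖ ^ 2 * v m) →
      (∀ n, 0 ≤ τ n) →
      (∀ n, Summable (fun m : ℕ => if n ≤ m then τ m ^ 2 else 0)) →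
      (∀ n, V n * (∑' m : ℕ, if n ≤ m then τ m ^ 2 else 0) ≤ A) →
      (∑' n : ℕ, τ n ^ 2 * (∑ m ∈ Finset.Icc 1 (n - 1), ‖a m‖ * v m) ^ 2)
        ≤ C * A * ∑' m : ℕ, ‖a m‖ ^ 2 * v m := by
  refine ⟨4, by norm_num, ?_⟩
  intro v a τ V A hv hV ha hτ hsum hA
  have Vpos := hardy_Vpos v V hv hV
  -- A ≥ 0
  have hA0 : 0 ≤ A := by
    have hT2 : 0 ≤ ∑' m : ℕ, if 2 ≤ m then τ m ^2 else 0 :=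
      tsum_nonneg fun m => by positivity
    have := hA 2
    nlinarith [Vpos 2 le_rfl]
  -- Σ ≥ 0
  set Sig : ℝ := ∑' m : ℕ, ‖a m‖ ^ 2 * v m with hSig
  have hSig0 : 0 ≤ Sig := tsum_nonneg fun m => mul_nonneg (sq_nonneg _) (hv m).le
  -- main finite bound
  have main : ∀ N : ℕ, ∑ n ∈ Finset.range N,
      τ n ^ 2 * (∑ m ∈ Finset.Icc 1 (n - 1), ‖a m‖ * v m) ^ 2 ≤ 4 * A * Sig := by
    intro N
    have step1 : ∑ n ∈ Finset.range N,
        τ n ^ 2 * (∑ m ∈ Finset.Icc 1 (n - 1), ‖a m‖ * v m) ^ 2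
        ≤ ∑ n ∈ Finset.range N, ∑ m ∈ Finset.Icc 1 (n-1),
            (‖a m‖ ^2 * v m * Real.sqrt (V (m+1))) * (2 * τ n ^2 * Real.sqrt (V n)) := by
      apply Finset.sum_le_sum
      intro n _
      calc τ n ^ 2 * (∑ m ∈ Finset.Icc 1 (n - 1), ‖a m‖ * v m) ^ 2
          ≤ τ n ^ 2 * ((∑ m ∈ Finset.Icc 1 (n-1),
              ‖a m‖ ^2 * v m * Real.sqrt (V (m+1))) * (2 * Real.sqrt (V n))) :=
            mul_le_mul_of_nonneg_left (hardy_cs_step v V a hv hV n) (sq_nonneg _)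
        _ = ∑ m ∈ Finset.Icc 1 (n-1),
              (‖a m‖ ^2 * v m * Real.sqrt (V (m+1))) * (2 * τ n ^2 * Real.sqrt (V n)) := by
            rw [Finset.sum_mul, Finset.mul_sum]
            apply Finset.sum_congr rfl
            intro m _
            ring
    have step2 : ∑ n ∈ Finset.range N, ∑ m ∈ Finset.Icc 1 (n-1),
          (‖a m‖ ^2 * v m * Real.sqrt (V (m+1))) * (2 * τ n ^2 * Real.sqrt (V n))
        = ∑ m ∈ Finset.Icc 1 (N-1), (‖a m‖ ^2 * v m * Real.sqrt (V (m+1)))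
            * (2 * ∑ n ∈ Finset.Icc (m+1) (N-1), τ n ^2 * Real.sqrt (V n)) := by
      rw [Finset.sum_comm' (t' := Finset.Icc 1 (N-1)) (s' := fun m => Finset.Icc (m+1) (N-1))]
      · apply Finset.sum_congr rfl
        intro m _
        rw [Finset.mul_sum, Finset.mul_sum]
        apply Finset.sum_congr rfl
        intro n _
        ring
      · intro n m
        simp only [Finset.mem_Icc, Finset.mem_range]
        omega
    have step3 : ∑ m ∈ Finset.Icc 1 (N-1), (‖a m‖ ^2 * v m * Real.sqrt (V (m+1)))
          * (2 * ∑ n ∈ Finset.Icc (m+1) (N-1), τ n ^2 * Real.sqrt (V n))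
        ≤ ∑ m ∈ Finset.Icc 1 (N-1), 4 * A * (‖a m‖ ^2 * v m) := by
      apply Finset.sum_le_sum
      intro m hm
      have hm1 : 1 ≤ m := (Finset.mem_Icc.mp hm).1
      have hVp : 0 < Real.sqrt (V (m+1)) := Real.sqrt_pos.mpr (Vpos (m+1) (by omega))
      have htail := hardy_tail v V τ A hv hV hτ hsum hA hA0 m (N-1) hm1
      have hc : 0 ≤ ‖a m‖ ^2 * v m * Real.sqrt (V (m+1)) :=
        mul_nonneg (mul_nonneg (sq_nonneg _) (hv m).le) hVp.le
      calc (‖a m‖ ^2 * v m * Real.sqrt (V (m+1)))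
            * (2 * ∑ n ∈ Finset.Icc (m+1) (N-1), τ n ^2 * Real.sqrt (V n))
          ≤ (‖a m‖ ^2 * v m * Real.sqrt (V (m+1)))
            * (2 * (2 * A / Real.sqrt (V (m+1)))) := by
            apply mul_le_mul_of_nonneg_left _ hc
            linarith
        _ = 4 * A * (‖a m‖ ^2 * v m)
            * (Real.sqrt (V (m+1)) / Real.sqrt (V (m+1))) := by ring
        _ = 4 * A * (‖a m‖ ^2 * v m) := by
            rw [div_self hVp.ne', mul_one]
    have step4 : ∑ m ∈ Finset.Icc 1 (N-1), 4 * A * (‖a m‖ ^2 * v m)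
        ≤ 4 * A * Sig := by
      rw [← Finset.mul_sum]
      apply mul_le_mul_of_nonneg_left _ (by linarith)
      exact Summable.sum_le_tsum _ (fun m _ => mul_nonneg (sq_nonneg _) (hv m).le) ha
    calc ∑ n ∈ Finset.range N,
          τ n ^ 2 * (∑ m ∈ Finset.Icc 1 (n - 1), ‖a m‖ * v m) ^ 2
        ≤ _ := step1
      _ = _ := step2
      _ ≤ _ := step3
      _ ≤ 4 * A * Sig := step4
  -- conclude via tsum_le_of_sum_le'
  apply tsum_le_of_sum_le' (by positivity)
  intro s
  rcases s.eq_empty_or_nonempty with rfl | hs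
  · simp
    positivity
  · set N := s.max' hs + 1 with hN
    calc ∑ n ∈ s, τ n ^ 2 * (∑ m ∈ Finset.Icc 1 (n - 1), ‖a m‖ * v m) ^ 2
        ≤ ∑ n ∈ Finset.range N,
            τ n ^ 2 * (∑ m ∈ Finset.Icc 1 (n - 1), ‖a m‖ * v m) ^ 2 := by
          apply Finset.sum_le_sum_of_subset_of_nonneg
          · intro n hn
            rw [Finset.mem_range]
            have := Finset.le_max' s n hn
            omega
          · intro n _ _
            positivity
      _ ≤ 4 * A * Sig := main N
end

section
/- Let δ ∈ (0, 1/2) and N a positive integer, and let (w_j), (W_j) be positive reals with W_{j+1} = W_j + w_j, W_1 > 0, and w_j ≤ δ·W_j for all j. Suppose indices are grouped into consecutive blocks B_1, B_2, ... such that for each block, δ ≤ sum_{j ∈ B_i} w_j/W_j < 2δ. Then along the subsequence obtained by keeping every N-th block, one has for any retained index j: sum over retained indices l < j (from retained blocks only) of w_l/W_{l+1}^{1/2} ≤ (16δ/(1 - (1-2δ)^N))·W_j^{1/2}. -/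
set_option maxHeartbeats 1000000

open Finset

private lemma aux_Wpos {w W : ℕ → ℝ} (hw : ∀ j, 0 < w j) (hW1 : 0 < W 1)
    (hWrec : ∀ j ≥ 1, W (j + 1) = W j + w j) :
    ∀ j, 1 ≤ j → 0 < W j := by
  intro j
  induction j with
  | zero => intro h; omega
  | succ n ih =>
    intro _
    rcases Nat.eq_zero_or_pos n with rfl | hn
    · exact hW1
    · rw [hWrec n hn]; exact add_pos (ih hn) (hw n)

private lemma aux_Wmono {w W : ℕ → ℝ} (hw : ∀ j, 0 < w j)
    (hWrec : ∀ j ≥ 1, W (j + 1) = W j + w j) :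
    ∀ a c, 1 ≤ a → a ≤ c → W a ≤ W c := by
  intro a c ha hac
  induction c, hac using Nat.le_induction with
  | base => exact le_refl _
  | succ n hn ih =>
    have h1 : 1 ≤ n := le_trans ha hn
    rw [hWrec n h1]
    have := hw n
    linarith

private lemma aux_tele {w W : ℕ → ℝ}
    (hWrec : ∀ j ≥ 1, W (j + 1) = W j + w j) :
    ∀ a c, 1 ≤ a → a ≤ c → ∑ l ∈ Ico a c, w l = W c - W a := by
  intro a c ha hac
  induction c, hac using Nat.le_induction with
  | base => simp
  | succ n hn ih =>
    rw [Finset.sum_Ico_succ_top hn, ih, hWrec n (le_trans ha hn)]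
    ring

open Classical in
theorem stmt_19 (δ : ℝ) (hδ : δ ∈ Set.Ioo (0:ℝ) (1/2)) (N : ℕ) (hN : 1 ≤ N)
    (w W : ℕ → ℝ) (hw : ∀ j, 0 < w j) (hW1 : 0 < W 1)
    (hWrec : ∀ j ≥ 1, W (j + 1) = W j + w j)
    (hsmall : ∀ j ≥ 1, w j ≤ δ * W j)
    (b : ℕ → ℕ) (hb1 : b 1 = 1) (hbmono : ∀ i ≥ 1, b i < b (i + 1))
    (hblock : ∀ i ≥ 1,
      δ ≤ ∑ j ∈ Finset.Ico (b i) (b (i + 1)), w j / W j ∧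
      (∑ j ∈ Finset.Ico (b i) (b (i + 1)), w j / W j) < 2 * δ) :
    ∀ j : ℕ, (∃ k : ℕ, b (k * N + 1) ≤ j ∧ j < b (k * N + 2)) →
      (∑ l ∈ Finset.range j,
          if (∃ k : ℕ, b (k * N + 1) ≤ l ∧ l < b (k * N + 2)) then
            w l / Real.sqrt (W (l + 1)) else 0)
        ≤ (16 * δ / (1 - (1 - 2 * δ) ^ N)) * Real.sqrt (W j) := by
  obtain ⟨hδ0, hδ2⟩ := hδ
  intro j hj
  obtain ⟨K, hKj, hjK⟩ := hj
  have hWpos := aux_Wpos hw hW1 hWrec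
  have hWmono := aux_Wmono hw hWrec
  have htele := aux_tele hWrec
  -- b is monotone
  have hbmono' : ∀ i i', 1 ≤ i → i ≤ i' → b i ≤ b i' := by
    intro i i' hi hii
    induction i', hii using Nat.le_induction with
    | base => exact le_refl _
    | succ n hn ih => exact le_trans ih (le_of_lt (hbmono n (le_trans hi hn)))
  have hbge : ∀ i, 1 ≤ i → 1 ≤ b i := by
    intro i hi
    have := hbmono' 1 i le_rfl hi
    omega
  -- per-block growth
  have hgrow : ∀ i, 1 ≤ i → (1 + δ) * W (b i) ≤ W (b (i + 1)) := by
    intro i hi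
    have hbi1 : 1 ≤ b i := hbge i hi
    have hbile : b i ≤ b (i + 1) := le_of_lt (hbmono i hi)
    have hWbi : 0 < W (b i) := hWpos _ hbi1
    have h1 : δ ≤ ∑ l ∈ Ico (b i) (b (i + 1)), w l / W l := (hblock i hi).1
    have h2 : ∑ l ∈ Ico (b i) (b (i + 1)), w l / W l
        ≤ (∑ l ∈ Ico (b i) (b (i + 1)), w l) / W (b i) := by
      rw [Finset.sum_div]
      apply Finset.sum_le_sum
      intro l hl
      obtain ⟨hl1, hl2⟩ := Finset.mem_Ico.mp hl
      have hWle : W (b i) ≤ W l := hWmono (b i) l hbi1 hl1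
      exact div_le_div_of_nonneg_left (hw l).le hWbi hWle
    rw [htele (b i) (b (i + 1)) hbi1 hbile] at h2
    have h3 : δ ≤ (W (b (i + 1)) - W (b i)) / W (b i) := le_trans h1 h2
    rw [le_div_iff₀ hWbi] at h3
    linarith
  -- iterated growth
  have hgrowpow : ∀ i m, 1 ≤ i → (1 + δ) ^ m * W (b i) ≤ W (b (i + m)) := by
    intro i m hi
    induction m with
    | zero => simp
    | succ n ih =>
      have h1 : (1 + δ) ^ (n + 1) * W (b i) = (1 + δ) * ((1 + δ) ^ n * W (b i)) := by ring
      rw [h1]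
      calc (1 + δ) * ((1 + δ) ^ n * W (b i)) ≤ (1 + δ) * W (b (i + n)) := by
            apply mul_le_mul_of_nonneg_left ih (by linarith)
        _ ≤ W (b (i + n + 1)) := hgrow _ (by omega)
  -- block partial sum bound
  have hblocksum : ∀ i u, 1 ≤ i → u ≤ b (i + 1) →
      ∑ l ∈ Ico (b i) u, w l / Real.sqrt (W (l + 1)) ≤ 2 * δ * Real.sqrt (W u) := by
    intro i u hi hu
    rcases le_or_gt u (b i) with h | h
    · rw [Finset.Ico_eq_empty (not_lt.mpr h), Finset.sum_empty]
      positivity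
    · have hbi1 : 1 ≤ b i := hbge i hi
      have hu1 : 1 ≤ u := by omega
      have hWu : 0 < W u := hWpos u hu1
      have key : ∀ l ∈ Ico (b i) u,
          w l / Real.sqrt (W (l + 1)) ≤ (w l / W l) * Real.sqrt (W u) := by
        intro l hl
        obtain ⟨hl1, hl2⟩ := Finset.mem_Ico.mp hl
        have hl1' : 1 ≤ l := le_trans hbi1 hl1
        have hWl : 0 < W l := hWpos l hl1'
        have hWl1 : 0 < W (l + 1) := hWpos _ (by omega)
        have hle : W (l + 1) ≤ W u := hWmono (l + 1) u (by omega) (by omega)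
        have e1 : w l / Real.sqrt (W (l + 1))
            = (w l / W (l + 1)) * Real.sqrt (W (l + 1)) := by
          rw [div_mul_eq_mul_div, mul_div_assoc, Real.sqrt_div_self, div_eq_mul_inv]
        rw [e1]
        apply mul_le_mul
        · apply div_le_div_of_nonneg_left (hw l).le hWl
          rw [hWrec l hl1']
          linarith [hw l]
        · exact Real.sqrt_le_sqrt hle
        · exact Real.sqrt_nonneg _
        · exact div_nonneg (hw l).le hWl.le
      calc ∑ l ∈ Ico (b i) u, w l / Real.sqrt (W (l + 1))
          ≤ ∑ l ∈ Ico (b i) u, (w l / W l) * Real.sqrt (W u) :=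
            Finset.sum_le_sum key
        _ = (∑ l ∈ Ico (b i) u, w l / W l) * Real.sqrt (W u) := by
            rw [Finset.sum_mul]
        _ ≤ (∑ l ∈ Ico (b i) (b (i + 1)), w l / W l) * Real.sqrt (W u) := by
            apply mul_le_mul_of_nonneg_right _ (Real.sqrt_nonneg _)
            apply Finset.sum_le_sum_of_subset_of_nonneg
            · exact Finset.Ico_subset_Ico le_rfl hu
            · intro l hl _
              obtain ⟨hl1, _⟩ := Finset.mem_Ico.mp hl
              exact div_nonneg (hw l).le (hWpos l (le_trans hbi1 hl1)).le
        _ ≤ 2 * δ * Real.sqrt (W u) := by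
            apply mul_le_mul_of_nonneg_right (le_of_lt (hblock i hi).2) (Real.sqrt_nonneg _)
  -- notation
  set f : ℕ → ℝ := fun l => w l / Real.sqrt (W (l + 1)) with hf
  have hfnn : ∀ l, 0 ≤ f l := fun l => div_nonneg (hw l).le (Real.sqrt_nonneg _)
  set P : ℕ → Prop := fun l => ∃ k : ℕ, b (k * N + 1) ≤ l ∧ l < b (k * N + 2) with hP
  have hj1 : 1 ≤ j := le_trans (hbge _ (by omega)) hKj
  have hWj : 0 < W j := hWpos j hj1
  -- the covering family
  set t : ℕ → Finset ℕ := fun k => Ico (b (k * N + 1)) (min (b (k * N + 2)) j) with ht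
  have hsubset : (Finset.range j).filter P ⊆ (Finset.range (K + 1)).biUnion t := by
    intro l hl
    obtain ⟨hlj, k', hk'1, hk'2⟩ := Finset.mem_filter.mp hl
    rw [Finset.mem_range] at hlj
    have hk'K : k' ≤ K := by
      by_contra hcon
      push_neg at hcon
      have h1 : K * N + 2 ≤ k' * N + 1 := by nlinarith
      have h2 : b (K * N + 2) ≤ b (k' * N + 1) := hbmono' _ _ (by omega) h1
      omega
    apply Finset.mem_biUnion.mpr
    exact ⟨k', Finset.mem_range.mpr (by omega), Finset.mem_Ico.mpr ⟨hk'1, lt_min hk'2 hlj⟩⟩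
  have hdisj : (↑(Finset.range (K + 1)) : Set ℕ).PairwiseDisjoint t := by
    have key : ∀ k k' : ℕ, k < k' → Disjoint (t k) (t k') := by
      intro k k' hkk'
      have h1 : k * N + 2 ≤ k' * N + 1 := by nlinarith
      have h2 : b (k * N + 2) ≤ b (k' * N + 1) := hbmono' _ _ (by omega) h1
      rw [Finset.disjoint_left]
      intro x hx hx'
      obtain ⟨_, hx2⟩ := Finset.mem_Ico.mp hx
      obtain ⟨hx1', _⟩ := Finset.mem_Ico.mp hx'
      have : x < b (k * N + 2) := lt_of_lt_of_le hx2 (min_le_left _ _)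
      omega
    intro k _ k' _ hne
    rcases lt_or_gt_of_ne hne with h | h
    · exact key k k' h
    · exact (key k' k h).symm
  -- geometric data
  have h1δ : (0:ℝ) < 1 + δ := by linarith
  set q : ℝ := 1 / (1 + δ) with hq
  have hq0 : 0 < q := by positivity
  have hq1 : q < 1 := by rw [hq, div_lt_one h1δ]; linarith
  set s : ℝ := Real.sqrt q with hs
  have hs0 : 0 < s := Real.sqrt_pos.mpr hq0
  have hs1 : s < 1 := by
    rw [hs]
    nlinarith [Real.mul_self_sqrt hq0.le, Real.sqrt_nonneg q]
  have hssq : s * s = q := Real.mul_self_sqrt hq0.le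
  set ρ : ℝ := s ^ N with hρ
  have hρ0 : 0 < ρ := pow_pos hs0 N
  have hρ1 : ρ < 1 := pow_lt_one₀ hs0.le hs1 (by omega)
  set c : ℝ := Real.sqrt (1 + δ) with hc
  have hc1 : 1 ≤ c := by
    nlinarith [Real.mul_self_sqrt h1δ.le, Real.sqrt_nonneg (1 + δ)]
  have hc43 : c ≤ 4 / 3 := by
    have hcsq : c * c = 1 + δ := Real.mul_self_sqrt h1δ.le
    nlinarith [Real.sqrt_nonneg (1 + δ)]
  -- bound each block's contribution
  have hTK : ∑ l ∈ t K, f l ≤ 2 * δ * Real.sqrt (W j) := by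
    have hmin : min (b (K * N + 2)) j = j := min_eq_right hjK.le
    rw [ht]
    simp only [hmin]
    exact hblocksum (K * N + 1) j (by omega) hjK.le
  have hTk : ∀ k, k < K → ∑ l ∈ t k, f l ≤ 2 * δ * c * ρ ^ (K - k) * Real.sqrt (W j) := by
    intro k hkK
    have h1 : ∑ l ∈ t k, f l ≤ ∑ l ∈ Ico (b (k * N + 1)) (b (k * N + 2)), f l := by
      apply Finset.sum_le_sum_of_subset_of_nonneg
      · exact Finset.Ico_subset_Ico le_rfl (min_le_left _ _)
      · intro l _ _; exact hfnn l
    have h2 : ∑ l ∈ Ico (b (k * N + 1)) (b (k * N + 2)), f l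
        ≤ 2 * δ * Real.sqrt (W (b (k * N + 2))) :=
      hblocksum (k * N + 1) (b (k * N + 2)) (by omega) le_rfl
    -- growth estimate
    have hm : k * N + 2 + ((K - k) * N - 1) = K * N + 1 := by
      have hKk : k + 1 ≤ K := hkK
      have : 1 ≤ (K - k) * N := by
        have : 1 ≤ K - k := by omega
        nlinarith
      have hNK : (K - k) * N + k * N = K * N := by
        rw [← Nat.add_mul]
        congr 1
        omega
      omega
    have h3 : (1 + δ) ^ ((K - k) * N - 1) * W (b (k * N + 2)) ≤ W (b (K * N + 1)) := by
      have := hgrowpow (k * N + 2) ((K - k) * N - 1) (by omega)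
      rwa [hm] at this
    have h4 : W (b (K * N + 1)) ≤ W j := hWmono _ _ (hbge _ (by omega)) hKj
    have hpowpos : (0:ℝ) < (1 + δ) ^ ((K - k) * N - 1) := pow_pos h1δ _
    have h5 : W (b (k * N + 2)) ≤ q ^ ((K - k) * N - 1) * W j := by
      rw [hq]
      rw [div_pow, one_pow]
      rw [div_mul_eq_mul_div, le_div_iff₀ hpowpos]
      calc W (b (k * N + 2)) * (1 + δ) ^ ((K - k) * N - 1)
          = (1 + δ) ^ ((K - k) * N - 1) * W (b (k * N + 2)) := by ring
        _ ≤ W (b (K * N + 1)) := h3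
        _ ≤ W j := h4
        _ = 1 * W j := by ring
    have h6 : Real.sqrt (W (b (k * N + 2)))
        ≤ s ^ ((K - k) * N - 1) * Real.sqrt (W j) := by
      calc Real.sqrt (W (b (k * N + 2)))
          ≤ Real.sqrt (q ^ ((K - k) * N - 1) * W j) := Real.sqrt_le_sqrt h5
        _ = Real.sqrt (q ^ ((K - k) * N - 1)) * Real.sqrt (W j) :=
            Real.sqrt_mul (by positivity) _
        _ = s ^ ((K - k) * N - 1) * Real.sqrt (W j) := by
            congr 1
            rw [Real.sqrt_eq_cases]
            left
            constructor
            · rw [← mul_pow, hssq]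
            · positivity
    have hsc : s * c = 1 := by
      rw [hs, hc, ← Real.sqrt_mul hq0.le]
      rw [hq]
      rw [show 1 / (1 + δ) * (1 + δ) = 1 by field_simp]
      simp
    have h7 : s ^ ((K - k) * N - 1) = c * ρ ^ (K - k) := by
      have hge1 : 1 ≤ (K - k) * N := by
        have : 1 ≤ K - k := by omega
        nlinarith
      have : (K - k) * N - 1 + 1 = (K - k) * N := by omega
      have hpow : s ^ ((K - k) * N - 1) * s = s ^ ((K - k) * N) := by
        rw [← pow_succ, this]
      have hρpow : ρ ^ (K - k) = s ^ ((K - k) * N) := by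
        rw [hρ, ← pow_mul, Nat.mul_comm]
      rw [hρpow, ← hpow]
      have : c = s⁻¹ := by
        field_simp
        linarith [hsc]
      rw [this]
      field_simp
    calc ∑ l ∈ t k, f l ≤ 2 * δ * Real.sqrt (W (b (k * N + 2))) := le_trans h1 h2
      _ ≤ 2 * δ * (s ^ ((K - k) * N - 1) * Real.sqrt (W j)) := by
          apply mul_le_mul_of_nonneg_left h6 (by linarith)
      _ = 2 * δ * c * ρ ^ (K - k) * Real.sqrt (W j) := by rw [h7]; ring
  -- assemble
  have hmain : (∑ l ∈ Finset.range j, if P l then f l else 0)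
      ≤ 2 * δ * Real.sqrt (W j) + 2 * δ * c * (ρ / (1 - ρ)) * Real.sqrt (W j) := by
    have e0 : (∑ l ∈ Finset.range j, if P l then f l else 0)
        = ∑ l ∈ (Finset.range j).filter P, f l := (Finset.sum_filter P f).symm
    rw [e0]
    have e1 : ∑ l ∈ (Finset.range j).filter P, f l
        ≤ ∑ l ∈ (Finset.range (K + 1)).biUnion t, f l :=
      Finset.sum_le_sum_of_subset_of_nonneg hsubset (fun l _ _ => hfnn l)
    have e2 : ∑ l ∈ (Finset.range (K + 1)).biUnion t, f l
        = ∑ k ∈ Finset.range (K + 1), ∑ l ∈ t k, f l :=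
      Finset.sum_biUnion hdisj
    have e3 : ∑ k ∈ Finset.range (K + 1), ∑ l ∈ t k, f l
        = (∑ k ∈ Finset.range K, ∑ l ∈ t k, f l) + ∑ l ∈ t K, f l :=
      Finset.sum_range_succ _ K
    have e4 : ∑ k ∈ Finset.range K, ∑ l ∈ t k, f l
        ≤ ∑ k ∈ Finset.range K, 2 * δ * c * ρ ^ (K - k) * Real.sqrt (W j) := by
      apply Finset.sum_le_sum
      intro k hk
      exact hTk k (Finset.mem_range.mp hk)
    have e5 : ∑ k ∈ Finset.range K, 2 * δ * c * ρ ^ (K - k) * Real.sqrt (W j)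
        = 2 * δ * c * (∑ k ∈ Finset.range K, ρ ^ (K - k)) * Real.sqrt (W j) := by
      rw [Finset.mul_sum, Finset.sum_mul]
    have e6 : ∑ k ∈ Finset.range K, ρ ^ (K - k) = ∑ k ∈ Finset.range K, ρ ^ (k + 1) := by
      have := Finset.sum_range_reflect (fun m => ρ ^ (m + 1)) K
      rw [← this]
      apply Finset.sum_congr rfl
      intro k hk
      rw [Finset.mem_range] at hk
      congr 1
      omega
    have e7 : ∑ k ∈ Finset.range K, ρ ^ (k + 1) = ρ * ∑ k ∈ Finset.range K, ρ ^ k := by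
      rw [Finset.mul_sum]
      apply Finset.sum_congr rfl
      intro k _
      ring
    have e8 : ∑ k ∈ Finset.range K, ρ ^ k ≤ 1 / (1 - ρ) := by
      have hgs : (∑ k ∈ Finset.range K, ρ ^ k) * (ρ - 1) = ρ ^ K - 1 := geom_sum_mul ρ K
      have hρK : 0 ≤ ρ ^ K := pow_nonneg hρ0.le K
      rw [le_div_iff₀ (by linarith)]
      nlinarith
    have e9 : ∑ k ∈ Finset.range K, ρ ^ (K - k) ≤ ρ / (1 - ρ) := by
      rw [e6, e7]
      calc ρ * ∑ k ∈ Finset.range K, ρ ^ k ≤ ρ * (1 / (1 - ρ)) :=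
            mul_le_mul_of_nonneg_left e8 hρ0.le
        _ = ρ / (1 - ρ) := by ring
    calc ∑ l ∈ (Finset.range j).filter P, f l
        ≤ ∑ k ∈ Finset.range (K + 1), ∑ l ∈ t k, f l := le_trans e1 (le_of_eq e2)
      _ = (∑ k ∈ Finset.range K, ∑ l ∈ t k, f l) + ∑ l ∈ t K, f l := e3
      _ ≤ 2 * δ * c * (∑ k ∈ Finset.range K, ρ ^ (K - k)) * Real.sqrt (W j)
          + 2 * δ * Real.sqrt (W j) := by
            apply add_le_add _ hTK
            rw [← e5]
            exact e4
      _ ≤ 2 * δ * c * (ρ / (1 - ρ)) * Real.sqrt (W j) + 2 * δ * Real.sqrt (W j) := by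
            apply add_le_add_left
            apply mul_le_mul_of_nonneg_right _ (Real.sqrt_nonneg _)
            apply mul_le_mul_of_nonneg_left e9
            positivity
      _ = 2 * δ * Real.sqrt (W j) + 2 * δ * c * (ρ / (1 - ρ)) * Real.sqrt (W j) := by ring
  -- numeric comparison
  set σ : ℝ := (1 - 2 * δ) ^ N with hσ
  have hu0 : (0:ℝ) ≤ 1 - 2 * δ := by linarith
  have hσ0 : 0 ≤ σ := pow_nonneg hu0 N
  have hσ1 : σ < 1 := pow_lt_one₀ hu0 (by linarith) (by omega)
  -- 1 - σ ≤ 3 * (1 - q ^ N)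
  have hkey : 1 - σ ≤ 3 * (1 - q ^ N) := by
    have gu : (∑ i ∈ Finset.range N, (1 - 2 * δ) ^ i) * ((1 - 2 * δ) - 1)
        = (1 - 2 * δ) ^ N - 1 := geom_sum_mul _ N
    have gq : (∑ i ∈ Finset.range N, q ^ i) * (q - 1) = q ^ N - 1 := geom_sum_mul _ N
    have hterm : ∑ i ∈ Finset.range N, (1 - 2 * δ) ^ i ≤ ∑ i ∈ Finset.range N, q ^ i := by
      apply Finset.sum_le_sum
      intro i _
      apply pow_le_pow_left₀ hu0
      rw [hq, le_div_iff₀ h1δ]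
      nlinarith
    have hsum_nn : 0 ≤ ∑ i ∈ Finset.range N, (1 - 2 * δ) ^ i :=
      Finset.sum_nonneg fun i _ => pow_nonneg hu0 i
    have h1q : 1 - q = δ / (1 + δ) := by
      rw [hq]; field_simp; ring
    have h2δ3 : 2 * δ ≤ 3 * (1 - q) := by
      rw [h1q, ← mul_div_assoc, le_div_iff₀ h1δ]
      nlinarith
    have h1qle : 0 ≤ 1 - q := by linarith
    -- 1 - σ = (2δ) * ∑ u^i ≤ 3(1-q) * ∑ q^i = 3 (1 - q^N)
    have eσ : 1 - σ = 2 * δ * ∑ i ∈ Finset.range N, (1 - 2 * δ) ^ i := by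
      rw [hσ]
      nlinarith [gu]
    have eq' : 1 - q ^ N = (1 - q) * ∑ i ∈ Finset.range N, q ^ i := by
      nlinarith [gq]
    rw [eσ, eq']
    calc 2 * δ * ∑ i ∈ Finset.range N, (1 - 2 * δ) ^ i
        ≤ 3 * (1 - q) * ∑ i ∈ Finset.range N, (1 - 2 * δ) ^ i := by
          apply mul_le_mul_of_nonneg_right h2δ3 hsum_nn
      _ ≤ 3 * (1 - q) * ∑ i ∈ Finset.range N, q ^ i := by
          apply mul_le_mul_of_nonneg_left hterm (by linarith)
      _ = 3 * ((1 - q) * ∑ i ∈ Finset.range N, q ^ i) := by ring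
  have hρsq : ρ * ρ = q ^ N := by
    rw [hρ, ← mul_pow, hssq]
  have hA : 0 < 1 - ρ := by linarith
  have hB : 0 < 1 - σ := by linarith
  have hfin : 1 - σ ≤ 6 * (1 - ρ) := by
    have h1 : 3 * (1 - q ^ N) ≤ 6 * (1 - ρ) := by nlinarith [hρsq]
    linarith
  have step : 2 * δ + 2 * δ * c * (ρ / (1 - ρ)) ≤ 16 * δ / (1 - σ) := by
    have e : 2 * δ + 2 * δ * c * (ρ / (1 - ρ)) = (2 * δ * (1 - ρ) + 2 * δ * c * ρ) / (1 - ρ) := by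
      field_simp
    rw [e, div_le_div_iff₀ hA hB]
    have t1 : 2 * δ * (1 - ρ) + 2 * δ * c * ρ ≤ 2 * δ * c := by
      nlinarith [mul_nonneg (mul_nonneg (by linarith : (0:ℝ) ≤ 2 * δ) hA.le)
        (by linarith : (0:ℝ) ≤ c - 1)]
    have t2 : (2 * δ * (1 - ρ) + 2 * δ * c * ρ) * (1 - σ) ≤ 2 * δ * c * (1 - σ) :=
      mul_le_mul_of_nonneg_right t1 hB.le
    have t3 : 2 * δ * c * (1 - σ) ≤ 2 * δ * c * (6 * (1 - ρ)) := by
      apply mul_le_mul_of_nonneg_left hfin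
      positivity
    have t4 : 2 * δ * c * (6 * (1 - ρ)) ≤ 16 * δ * (1 - ρ) := by
      nlinarith [mul_nonneg (mul_nonneg hδ0.le hA.le) (by linarith : (0:ℝ) ≤ 4 / 3 - c)]
    linarith
  calc (∑ l ∈ Finset.range j, if P l then f l else 0)
      ≤ 2 * δ * Real.sqrt (W j) + 2 * δ * c * (ρ / (1 - ρ)) * Real.sqrt (W j) := hmain
    _ = (2 * δ + 2 * δ * c * (ρ / (1 - ρ))) * Real.sqrt (W j) := by ring
    _ ≤ (16 * δ / (1 - σ)) * Real.sqrt (W j) :=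
        mul_le_mul_of_nonneg_right step (Real.sqrt_nonneg _)
end
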